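/- Let a > 0 and let g : ℝ → ℝ be continuous, bounded, and Lebesgue integrable. Then ∫_ℝ ε·g(r) / ((r² − a²)² + ε²) dr converges, as ε → 0⁺, to (π/(2a))·(g(a) + g(−a)). -/

import Mathlib

open MeasureTheory Filter Topology Real
open Set

set_option maxHeartbeats 1000000
open MeasureTheory Filter Topology Real Set

lemma my_arctan_lt_self {x : ℝ} (hx : 0 < x) : arctan x < x := by
  have h1 : 0 < arctan x := by simpa using Real.arctan_strictMono hx
  have h2 := Real.arctan_lt_pi_div_two x
  calc arctan x < tan (arctan x) := Real.lt_tan h1 h2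
    _ = x := Real.tan_arctan x

lemma my_hasDerivAt (c ε : ℝ) (hc : c ≠ 0) (hε : 0 < ε) (x₀ s : ℝ) :
    HasDerivAt (fun s => (1/c) * arctan (c * (s - x₀) / ε))
      (ε / (c^2 * (s - x₀)^2 + ε^2)) s := by
  have h1 : HasDerivAt (fun s : ℝ => c * (s - x₀) / ε) (c / ε) s := by
    simpa using (((hasDerivAt_id s).sub_const x₀).const_mul c).div_const ε
  have h2 := (Real.hasDerivAt_arctan (c * (s - x₀) / ε)).comp s h1
  have h3 := h2.const_mul (1/c)
  convert h3 using 1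
  · rfl
  · rfl
  · rfl
  have hεne : ε ≠ 0 := ne_of_gt hε
  have hd : (0:ℝ) < 1 + (c * (s - x₀) / ε)^2 := by positivity
  field_simp
  ring

lemma my_poisson_mass (c δ ε x₀ : ℝ) (hc : 0 < c) (hδ : 0 < δ) (hε : 0 < ε) :
    ∫ s in Ioo (x₀ - δ) (x₀ + δ), ε / (c^2 * (s - x₀)^2 + ε^2)
      = 2/c * arctan (c * δ / ε) := by
  have hcont : Continuous fun s : ℝ => ε / (c^2*(s-x₀)^2+ε^2) := by
    apply Continuous.div continuous_const (by continuity)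
    intro x; positivity
  rw [← integral_Ioc_eq_integral_Ioo, ← intervalIntegral.integral_of_le (by linarith)]
  rw [intervalIntegral.integral_eq_sub_of_hasDerivAt
    (fun s _ => my_hasDerivAt c ε (ne_of_gt hc) hε x₀ s)
    (hcont.intervalIntegrable _ _)]
  have h1 : c * (x₀ + δ - x₀) / ε = c * δ / ε := by ring_nf
  have h2 : c * (x₀ - δ - x₀) / ε = -(c * δ / ε) := by ring_nf
  rw [h1, h2, Real.arctan_neg]; ring


lemma my_halfc (c : ℝ) (hc : c ≠ 0) : 2/c * (π/2) = π/c := by field_simp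
lemma my_frac1 (p aa δ cm : ℝ) (hp : 0 ≤ p) (ha : 0 < aa) (hδ : 0 ≤ δ)
    (hcma : aa ≤ cm) (hcmeq : cm = 2*aa - δ) (hcm0 : 0 < cm) :
    p/cm - p/(2*aa) ≤ p*δ/(2*aa^2) := by
  rw [div_sub_div _ _ hcm0.ne' (by positivity : (2*aa) ≠ 0),
    div_le_div_iff₀ (by positivity) (by positivity)]
  have haδ : δ ≤ aa := by rw [hcmeq] at hcma; linarith
  subst hcmeq
  nlinarith [mul_nonneg (mul_nonneg (mul_nonneg hp hδ) ha.le) (sub_nonneg.2 haδ)]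
lemma my_frac2 (p aa δ cp : ℝ) (hp : 0 ≤ p) (ha : 0 < aa) (hδ : 0 ≤ δ)
    (hcp2a : 2*aa ≤ cp) (hcpeq : cp = 2*aa + δ) (hcp0 : 0 < cp) :
    p/(2*aa) - p/cp ≤ p*δ/(2*aa^2) := by
  rw [div_sub_div _ _ (by positivity : (2*aa) ≠ 0) hcp0.ne',
    div_le_div_iff₀ (by positivity) (by positivity)]
  subst hcpeq
  nlinarith [mul_nonneg (mul_nonneg (mul_nonneg hp hδ) ha.le)
    (show (0:ℝ) ≤ aa + δ by linarith)]
lemma my_twodiv (c x y : ℝ) (hc : c ≠ 0) : 2/c * (x - y) = 2*x/c - 2*y/c := by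
  field_simp
lemma my_b1 (ηv aa : ℝ) (hη : 0 < ηv) (ha : 0 < aa) :
    (ηv*aa/(5*(π+1))) * (π/aa) ≤ ηv/5 := by
  have hπ : (0:ℝ) < π := Real.pi_pos
  have heq : (ηv*aa/(5*(π+1))) * (π/aa) = ηv*π/(5*(π+1)) := by field_simp
  rw [heq, div_le_div_iff₀ (by positivity) (by norm_num)]
  nlinarith [hη.le, hπ.le]
lemma my_b2eq (Gv aa ηv : ℝ) (hG : Gv ≠ 0) (ha : aa ≠ 0) (hπ' : π ≠ 0) :
    Gv * (π*(2*aa^2*ηv/(5*π*Gv))/(2*aa^2)) = ηv/5 := by field_simp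
lemma my_b3eq (Gv aa ηv : ℝ) (hG : Gv ≠ 0) (ha : aa ≠ 0) :
    Gv * ((ηv*aa/(5*Gv))/aa) = ηv/5 := by field_simp
lemma my_b4eq (ηv δ aa Nv : ℝ) (hδ : δ ≠ 0) (ha : aa ≠ 0) (hN : Nv + 1 ≠ 0) :
    (ηv*δ^2*aa^2/(5*(Nv+1)))/(δ^2*aa^2)*Nv = ηv/5 * (Nv/(Nv+1)) := by field_simp

lemma my_half (a : ℝ) (ha : 0 < a) (g : ℝ → ℝ) (hg : Continuous g)
    (hint : Integrable g (volume : Measure ℝ)) :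
    Tendsto (fun ε : ℝ => ∫ r in Ioi (0:ℝ), ε * g r / ((r^2-a^2)^2+ε^2))
      (𝓝[>] (0:ℝ)) (𝓝 (π/(2*a) * g a)) := by
  rw [Metric.tendsto_nhdsWithin_nhds]
  intro η hη
  set G : ℝ := |g a| + 1 with hG
  have hG0 : 0 < G := by positivity
  set η₁ : ℝ := η * a / (5*(π+1)) with hη₁def
  have hπ : (0:ℝ) < π := Real.pi_pos
  have hη₁ : 0 < η₁ := by positivity
  -- continuity at a
  obtain ⟨δ₁, hδ₁, hgδ₁⟩ := Metric.continuousAt_iff.1 (hg.continuousAt (x := a)) η₁ hη₁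
  obtain ⟨δ, hδ0, hδa2, hδδ₁, hδmass⟩ :
      ∃ δ : ℝ, 0 < δ ∧ δ ≤ a/2 ∧ δ ≤ δ₁/2 ∧ δ ≤ 2*a^2*η/(5*π*G) :=
    ⟨min (min (a/2) (δ₁/2)) (2*a^2*η/(5*π*G)),
      lt_min (lt_min (by linarith) (by linarith)) (by positivity),
      (min_le_left _ _).trans (min_le_left _ _),
      (min_le_left _ _).trans (min_le_right _ _), min_le_right _ _⟩
  have hδa : δ < a := by linarith
  set cm : ℝ := 2*a - δ with hcm
  set cp : ℝ := 2*a + δ with hcp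
  have hcm0 : 0 < cm := by simp only [hcm]; linarith
  have hcma : a ≤ cm := by simp only [hcm]; linarith
  have hcp0 : 0 < cp := by simp only [hcp]; linarith
  have hcp2a : 2*a ≤ cp := by simp only [hcp]; linarith
  set ρ : ℝ := η * a / (5*G) with hρdef
  have hρ : 0 < ρ := by positivity
  set N : ℝ := ∫ r : ℝ, |g r| with hN
  have hN0 : 0 ≤ N := integral_nonneg fun r => abs_nonneg _
  refine ⟨min (η*δ^2*a^2/(5*(N+1))) (ρ * (cp * δ)), lt_min (by positivity) (by positivity),
    fun ε hε hεlt => ?_⟩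
  have hε0 : 0 < ε := hε
  rw [Real.dist_eq, sub_zero, abs_of_pos hε0] at hεlt
  have hεtail : ε < η*δ^2*a^2/(5*(N+1)) := lt_of_lt_of_le hεlt (min_le_left _ _)
  have hεarc : ε < ρ * (cp * δ) := lt_of_lt_of_le hεlt (min_le_right _ _)
  -- basic positivity of denominators
  have hden : ∀ r : ℝ, 0 < (r^2-a^2)^2 + ε^2 := fun r => by positivity
  set f : ℝ → ℝ := fun r => ε * g r / ((r^2-a^2)^2+ε^2) with hf
  set K : ℝ → ℝ := fun r => ε / ((r^2-a^2)^2+ε^2) with hK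
  have hKcont : Continuous K := by
    apply Continuous.div continuous_const
      ((((continuous_id.pow 2).sub continuous_const).pow 2).add continuous_const)
    intro r; exact ne_of_gt (hden r)
  have hfK : ∀ r, f r = g r * K r := fun r => by simp only [hf, hK]; ring
  have hKnonneg : ∀ r, 0 ≤ K r := fun r => div_nonneg hε0.le (hden r).le
  have hKle : ∀ r, K r ≤ 1/ε := fun r => by
    rw [div_le_div_iff₀ (hden r) hε0]
    nlinarith [sq_nonneg (r^2-a^2)]
  have hfint : Integrable f := by
    have := hint.bdd_mul (hKcont.aestronglyMeasurable) (c := 1/ε) (Eventually.of_forall fun r => by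
      rw [Real.norm_eq_abs, abs_of_nonneg (hKnonneg r)]; exact hKle r)
    apply this.congr
    filter_upwards with r
    rw [hfK r]; ring
  set I : Set ℝ := Ioo (a-δ) (a+δ) with hI
  have hIsub : I ⊆ Ioi (0:ℝ) := fun r hr => by
    simp only [hI, mem_Ioo] at hr; simp only [mem_Ioi]; linarith [hr.1]
  have hImeas : MeasurableSet I := measurableSet_Ioo
  set T : Set ℝ := Ioi (0:ℝ) \ I with hT
  have hTmeas : MeasurableSet T := measurableSet_Ioi.diff hImeas
  have hsplitset : ∫ r in Ioi (0:ℝ), f r = (∫ r in I, f r) + ∫ r in T, f r := by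
    rw [← setIntegral_union disjoint_sdiff_self_right hTmeas
      hfint.integrableOn hfint.integrableOn, union_diff_cancel hIsub]
  -- tail bound
  have htailpt : ∀ r ∈ T, |f r| ≤ ε/(δ^2*a^2) * |g r| := by
    intro r hr
    obtain ⟨hr0, hrI⟩ := hr
    simp only [hI, mem_Ioo, not_and_or, not_lt] at hrI
    simp only [mem_Ioi] at hr0
    have hden2 : δ^2*a^2 ≤ (r^2-a^2)^2 + ε^2 := by
      rcases hrI with h | h
      · have h3 : δ*a ≤ a^2 - r^2 := by nlinarith
        nlinarith [sq_nonneg ε, mul_le_mul h3 h3 (by positivity) (by nlinarith)]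
      · have h3 : δ*a ≤ r^2 - a^2 := by nlinarith
        nlinarith [sq_nonneg ε, mul_le_mul h3 h3 (by positivity) (by nlinarith)]
    have : |f r| = ε * |g r| / ((r^2-a^2)^2+ε^2) := by
      rw [hf, abs_div, abs_of_pos (hden r), abs_mul, abs_of_pos hε0]
    rw [this, div_le_iff₀ (hden r)]
    calc ε * |g r| = ε/(δ^2*a^2) * |g r| * (δ^2*a^2) := by
          field_simp
      _ ≤ ε/(δ^2*a^2) * |g r| * ((r^2-a^2)^2+ε^2) := by
          apply mul_le_mul_of_nonneg_left hden2; positivity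
  have htail : |∫ r in T, f r| ≤ ε/(δ^2*a^2) * N := by
    calc |∫ r in T, f r| ≤ ∫ r in T, |f r| := by
          simpa [Real.norm_eq_abs] using
            norm_integral_le_integral_norm (μ := volume.restrict T) f
      _ ≤ ∫ r in T, ε/(δ^2*a^2) * |g r| := by
          apply setIntegral_mono_on hfint.abs.integrableOn
            ((hint.abs.const_mul _).integrableOn) hTmeas htailpt
      _ ≤ ∫ r : ℝ, ε/(δ^2*a^2) * |g r| := by
          apply setIntegral_le_integral (hint.abs.const_mul _)
          filter_upwards with r; positivity
      _ = ε/(δ^2*a^2) * N := by rw [hN, integral_const_mul]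
  -- near part
  set K1 : ℝ → ℝ := fun r => ε / (cm^2*(r-a)^2+ε^2) with hK1
  set K2 : ℝ → ℝ := fun r => ε / (cp^2*(r-a)^2+ε^2) with hK2
  have hK1cont : Continuous K1 := by
    apply Continuous.div continuous_const
      ((continuous_const.mul ((continuous_id.sub continuous_const).pow 2)).add continuous_const)
    intro r; show cm^2*(r-a)^2+ε^2 ≠ 0; positivity
  have hK2cont : Continuous K2 := by
    apply Continuous.div continuous_const
      ((continuous_const.mul ((continuous_id.sub continuous_const).pow 2)).add continuous_const)
    intro r; show cp^2*(r-a)^2+ε^2 ≠ 0; positivity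
  have hK1int : IntegrableOn K1 I :=
    (hK1cont.integrableOn_Icc (a := a-δ) (b := a+δ)).mono_set Ioo_subset_Icc_self
  have hK2int : IntegrableOn K2 I :=
    (hK2cont.integrableOn_Icc (a := a-δ) (b := a+δ)).mono_set Ioo_subset_Icc_self
  have hKintI : IntegrableOn K I :=
    (hKcont.integrableOn_Icc (a := a-δ) (b := a+δ)).mono_set Ioo_subset_Icc_self
  have hgKint : IntegrableOn (fun r => (g r - g a) * K r) I :=
    (((hg.sub continuous_const).mul hKcont).integrableOn_Icc
      (a := a-δ) (b := a+δ)).mono_set Ioo_subset_Icc_self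
  have hKleK1 : ∀ r ∈ I, K r ≤ K1 r := by
    intro r hr
    simp only [hI, mem_Ioo] at hr
    apply div_le_div_of_nonneg_left hε0.le (by positivity)
    have h1 : cm ≤ r + a := by simp only [hcm]; linarith [hr.1]
    have h2 : cm^2*(r-a)^2 ≤ (r^2-a^2)^2 := by
      have : (r^2-a^2)^2 = (r+a)^2*(r-a)^2 := by ring
      rw [this]
      apply mul_le_mul_of_nonneg_right _ (sq_nonneg _)
      nlinarith [hcm0]
    linarith
  have hK2leK : ∀ r ∈ I, K2 r ≤ K r := by
    intro r hr
    simp only [hI, mem_Ioo] at hr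
    apply div_le_div_of_nonneg_left hε0.le (by positivity)
    have h1 : r + a ≤ cp := by simp only [hcp]; linarith [hr.2]
    have h0 : (0:ℝ) < r + a := by linarith [hr.1, hδa]
    have h2 : (r^2-a^2)^2 ≤ cp^2*(r-a)^2 := by
      have : (r^2-a^2)^2 = (r+a)^2*(r-a)^2 := by ring
      rw [this]
      apply mul_le_mul_of_nonneg_right _ (sq_nonneg _)
      nlinarith
    linarith
  have hM1 : ∫ r in I, K1 r = 2/cm * arctan (cm*δ/ε) := my_poisson_mass cm δ ε a hcm0 hδ0 hε0
  have hM2 : ∫ r in I, K2 r = 2/cp * arctan (cp*δ/ε) := my_poisson_mass cp δ ε a hcp0 hδ0 hε0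
  set M : ℝ := ∫ r in I, K r with hM
  have harctan_half : ∀ x : ℝ, arctan x ≤ π/2 := fun x => (Real.arctan_lt_pi_div_two x).le
  have hMupper : M ≤ π/cm := by
    calc M ≤ ∫ r in I, K1 r := setIntegral_mono_on hKintI hK1int hImeas hKleK1
      _ = 2/cm * arctan (cm*δ/ε) := hM1
      _ ≤ 2/cm * (π/2) := by
          apply mul_le_mul_of_nonneg_left (harctan_half _) (by positivity)
      _ = π/cm := my_halfc cm hcm0.ne'
  have hMlower : π/cp - ρ/a ≤ M := by
    have hx : 0 < cp*δ/ε := by positivity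
    have harc : π/2 - arctan (cp*δ/ε) < ρ := by
      have h1 : arctan ((cp*δ/ε)⁻¹) = π/2 - arctan (cp*δ/ε) := Real.arctan_inv_of_pos hx
      have h2 : (cp*δ/ε)⁻¹ = ε/(cp*δ) := by field_simp
      have h3 : arctan (ε/(cp*δ)) < ε/(cp*δ) := my_arctan_lt_self (by positivity)
      have h4 : ε/(cp*δ) < ρ := by
        rw [div_lt_iff₀ (by positivity)]; linarith [hεarc]
      rw [h2] at h1
      linarith [h1, h3, h4]
    calc π/cp - ρ/a ≤ 2/cp * arctan (cp*δ/ε) := by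
          have h5 : 2/cp * (π/2 - ρ) ≤ 2/cp * arctan (cp*δ/ε) := by
            apply mul_le_mul_of_nonneg_left (by linarith) (by positivity)
          have h6 : π/cp - ρ/a ≤ 2/cp * (π/2 - ρ) := by
            have e1 : 2/cp * (π/2 - ρ) = 2*(π/2)/cp - 2*ρ/cp := my_twodiv cp _ _ hcp0.ne'
            have e2 : 2*(π/2)/cp = π/cp := by rw [← my_halfc cp hcp0.ne']; ring
            have e3 : 2*ρ/cp ≤ ρ/a := by
              rw [div_le_div_iff₀ hcp0 ha]; nlinarith
            rw [e1, e2]; linarith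
          linarith
      _ = ∫ r in I, K2 r := hM2.symm
      _ ≤ M := setIntegral_mono_on hK2int hKintI hImeas hK2leK
  have hMabs : |M - π/(2*a)| ≤ π*δ/(2*a^2) + ρ/a := by
    have h1 : π/cm - π/(2*a) ≤ π*δ/(2*a^2) :=
      my_frac1 π a δ cm hπ.le ha hδ0.le hcma hcm hcm0
    have h2 : π/(2*a) - π/cp ≤ π*δ/(2*a^2) :=
      my_frac2 π a δ cp hπ.le ha hδ0.le hcp2a hcp hcp0
    rw [abs_le]
    refine ⟨by linarith [div_nonneg hρ.le ha.le], by linarith [div_nonneg hρ.le ha.le]⟩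
  have hJsplit : ∫ r in I, f r = (∫ r in I, (g r - g a) * K r) + g a * M := by
    have heq : ∀ r, f r = (g r - g a) * K r + g a * K r := fun r => by rw [hfK r]; ring
    calc ∫ r in I, f r = ∫ r in I, ((g r - g a) * K r + g a * K r) := by
          apply integral_congr_ae; filter_upwards with r; rw [heq r]
      _ = (∫ r in I, (g r - g a) * K r) + ∫ r in I, g a * K r :=
          integral_add hgKint (hKintI.const_mul _)
      _ = (∫ r in I, (g r - g a) * K r) + g a * M := by rw [integral_const_mul, hM]
  have hvar : |∫ r in I, (g r - g a) * K r| ≤ η₁ * (π/a) := by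
    calc |∫ r in I, (g r - g a) * K r| ≤ ∫ r in I, |(g r - g a) * K r| := by
          simpa only [Real.norm_eq_abs] using
            norm_integral_le_integral_norm (μ := volume.restrict I) (fun r => (g r - g a) * K r)
      _ ≤ ∫ r in I, η₁ * K1 r := by
          apply setIntegral_mono_on hgKint.abs (hK1int.const_mul _) hImeas
          intro r hr
          have hrI := hr
          simp only [hI, mem_Ioo] at hr
          have hdist : dist r a < δ₁ := by
            rw [Real.dist_eq, abs_lt]; constructor <;> linarith [hr.1, hr.2, hδδ₁, hδ₁]
          have hgr : |g r - g a| ≤ η₁ := by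
            have := hgδ₁ hdist; rw [Real.dist_eq] at this; linarith
          rw [abs_mul, abs_of_nonneg (hKnonneg r)]
          exact mul_le_mul hgr (hKleK1 r hrI) (hKnonneg r) hη₁.le
      _ = η₁ * ∫ r in I, K1 r := integral_const_mul _ _
      _ = η₁ * (2/cm * arctan (cm*δ/ε)) := by rw [hM1]
      _ ≤ η₁ * (π/a) := by
          apply mul_le_mul_of_nonneg_left _ hη₁.le
          calc 2/cm * arctan (cm*δ/ε) ≤ 2/cm * (π/2) := by
                apply mul_le_mul_of_nonneg_left (harctan_half _) (by positivity)
            _ = π/cm := my_halfc cm hcm0.ne'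
            _ ≤ π/a := by apply div_le_div_of_nonneg_left hπ.le ha hcma
  have hga : |g a| ≤ G := by rw [hG]; linarith
  have b1 : η₁ * (π/a) ≤ η/5 := by
    rw [hη₁def]; exact my_b1 η a hη ha
  have b2 : |g a| * (π*δ/(2*a^2)) ≤ η/5 := by
    calc |g a| * (π*δ/(2*a^2)) ≤ G * (π*(2*a^2*η/(5*π*G))/(2*a^2)) := by
          have hδle : π*δ/(2*a^2) ≤ π*(2*a^2*η/(5*π*G))/(2*a^2) :=
            div_le_div_of_nonneg_right (mul_le_mul_of_nonneg_left hδmass hπ.le)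
              (by positivity)
          exact mul_le_mul hga hδle (by positivity) hG0.le
      _ = η/5 := my_b2eq G a η hG0.ne' ha.ne' hπ.ne'
  have b3 : |g a| * (ρ/a) ≤ η/5 := by
    calc |g a| * (ρ/a) ≤ G * (ρ/a) := by
          apply mul_le_mul_of_nonneg_right hga (by positivity)
      _ = η/5 := by rw [hρdef]; exact my_b3eq G a η hG0.ne' ha.ne'
  have b4 : ε/(δ^2*a^2) * N ≤ η/5 := by
    calc ε/(δ^2*a^2) * N ≤ (η*δ^2*a^2/(5*(N+1)))/(δ^2*a^2) * N :=
          mul_le_mul_of_nonneg_right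
            (div_le_div_of_nonneg_right hεtail.le (by positivity)) hN0
      _ = η/5 * (N/(N+1)) := my_b4eq η δ a N hδ0.ne' ha.ne' (by positivity)
      _ ≤ η/5 * 1 := by
          apply mul_le_mul_of_nonneg_left _ (by positivity)
          rw [div_le_one (by positivity)]; linarith
      _ = η/5 := mul_one _
  have key : |(∫ r in I, f r) - π/(2*a)*g a| ≤ η₁*(π/a) + |g a| * (π*δ/(2*a^2) + ρ/a) := by
    rw [hJsplit]
    have heq2 : (∫ r in I, (g r - g a)*K r) + g a * M - π/(2*a)*g a
        = (∫ r in I, (g r - g a)*K r) + g a * (M - π/(2*a)) := by ring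
    rw [heq2]
    calc |(∫ r in I, (g r - g a)*K r) + g a * (M - π/(2*a))|
        ≤ |∫ r in I, (g r - g a)*K r| + |g a * (M - π/(2*a))| := abs_add_le _ _
      _ ≤ η₁*(π/a) + |g a| * (π*δ/(2*a^2) + ρ/a) := by
          apply add_le_add hvar
          rw [abs_mul]
          exact mul_le_mul_of_nonneg_left hMabs (abs_nonneg _)
  rw [Real.dist_eq, hsplitset]
  have habs2 : |(∫ r in I, f r) + (∫ r in T, f r) - π/(2*a)*g a|
      ≤ |(∫ r in I, f r) - π/(2*a)*g a| + |∫ r in T, f r| := by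
    have : (∫ r in I, f r) + (∫ r in T, f r) - π/(2*a)*g a
        = ((∫ r in I, f r) - π/(2*a)*g a) + (∫ r in T, f r) := by ring
    rw [this]; exact abs_add_le _ _
  have hmulexp : |g a| * (π*δ/(2*a^2) + ρ/a)
      = |g a| * (π*δ/(2*a^2)) + |g a| * (ρ/a) := by ring
  have hη5 : (0:ℝ) < η/5 := by linarith
  linarith [key, habs2, htail, b1, b2, b3, b4,
    hmulexp ▸ key]

/-- One-dimensional concentration computation behind Fermi's golden rule:
`∫ ε g(r) / ((r²-a²)² + ε²) dr → (π/(2a)) (g(a) + g(-a))` as `ε → 0⁺`. -/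
theorem stmt_6 (a : ℝ) (ha : 0 < a) (g : ℝ → ℝ) (hg : Continuous g)
    (hb : ∃ M : ℝ, ∀ r : ℝ, |g r| ≤ M) (hint : Integrable g (volume : Measure ℝ)) :
    Tendsto (fun ε : ℝ => ∫ r : ℝ, ε * g r / ((r ^ 2 - a ^ 2) ^ 2 + ε ^ 2))
      (𝓝[>] (0 : ℝ)) (𝓝 (π / (2 * a) * (g a + g (-a)))) := by
  have h1 := my_half a ha g hg hint
  have h2 := my_half a ha (fun r => g (-r)) (hg.comp continuous_neg) hint.comp_neg
  have h3 := h1.add h2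
  have h4 : π/(2*a)*g a + π/(2*a)*((fun r => g (-r)) a) = π / (2 * a) * (g a + g (-a)) := by
    simp; ring
  rw [h4] at h3
  refine Tendsto.congr' ?_ h3
  filter_upwards [self_mem_nhdsWithin] with ε hε
  have hε0 : 0 < ε := hε
  have hden : ∀ r : ℝ, 0 < (r^2-a^2)^2 + ε^2 := fun r => by positivity
  have hKcont : Continuous fun r : ℝ => ε / ((r^2-a^2)^2+ε^2) := by
    apply Continuous.div continuous_const
      ((((continuous_id.pow 2).sub continuous_const).pow 2).add continuous_const)
    intro r; exact ne_of_gt (hden r)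
  have hfint : Integrable (fun r : ℝ => ε * g r / ((r^2-a^2)^2+ε^2)) := by
    have hb2 : ∀ r : ℝ, ‖ε / ((r^2-a^2)^2+ε^2)‖ ≤ 1/ε := by
      intro r
      rw [Real.norm_eq_abs, abs_of_nonneg (div_nonneg hε0.le (hden r).le),
        div_le_div_iff₀ (hden r) hε0]
      nlinarith [sq_nonneg (r^2-a^2)]
    have := hint.bdd_mul hKcont.aestronglyMeasurable (c := 1/ε) (Eventually.of_forall hb2)
    apply this.congr
    filter_upwards with r
    ring
  have hrefl : ∫ r in Set.Iic (0:ℝ), ε * g r / ((r^2-a^2)^2+ε^2)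
      = ∫ r in Set.Ioi (0:ℝ), ε * g (-r) / ((r^2-a^2)^2+ε^2) := by
    rw [show ∫ r in Set.Ioi (0:ℝ), ε * g (-r) / ((r^2-a^2)^2+ε^2)
        = ∫ r in Set.Ioi (0:ℝ),
            (fun s : ℝ => ε * g s / ((s^2-a^2)^2+ε^2)) (-r) from by
      apply setIntegral_congr_ae measurableSet_Ioi
      filter_upwards with r _
      simp [neg_sq]]
    rw [integral_comp_neg_Ioi 0 (fun s : ℝ => ε * g s / ((s^2-a^2)^2+ε^2)), neg_zero]
  have hsplit := intervalIntegral.integral_Iic_add_Ioi (b := (0:ℝ)) hfint.integrableOn hfint.integrableOn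
  calc (∫ r in Set.Ioi (0:ℝ), ε * g r / ((r^2-a^2)^2+ε^2))
        + ∫ r in Set.Ioi (0:ℝ), ε * (fun r => g (-r)) r / ((r^2-a^2)^2+ε^2)
      = (∫ r in Set.Iic (0:ℝ), ε * g r / ((r^2-a^2)^2+ε^2))
        + ∫ r in Set.Ioi (0:ℝ), ε * g r / ((r^2-a^2)^2+ε^2) := by
        show _ = (∫ r in Set.Iic (0:ℝ), ε * g r / ((r^2-a^2)^2+ε^2))
          + ∫ r in Set.Ioi (0:ℝ), ε * g r / ((r^2-a^2)^2+ε^2)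
        rw [hrefl, add_comm]
    _ = ∫ r : ℝ, ε * g r / ((r ^ 2 - a ^ 2) ^ 2 + ε ^ 2) := hsplit
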